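/- Let ν be a nonzero σ-finite measure on ℝ whose moment generating function is finite for all real arguments, and let h(η) = log ∫ e^{ηx} dν(x) be the associated log-partition (cumulant) function, so that h''(η) ≥ 0 and h'(η) equals the mean of the exponentially tilted distribution. Fix a point y in the closure of the support of ν such that there is no η ∈ ℝ with h'(η) = y (the maximum likelihood estimate of η for the observation y does not exist), and suppose ν has an atom at y and y is the essential supremum (respectively essential infimum) of ν. Then, as η → c with c = +∞ (respectively c = −∞): h'(η) → y, h''(η) → 0, and η·h''(η) → 0. -/

import Mathlib

open MeasureTheory Filter Topology


lemma my_abs_pow_mul_exp_le (k : ℕ) (η t x : ℝ) (ht : |t - η| ≤ 1) :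
    |x| ^ k * Real.exp (t * x) ≤ Real.exp ((η + 1 + k) * x) + Real.exp ((η - (1 + k)) * x) := by
  have h1 : |x| ≤ Real.exp |x| := by nlinarith [Real.add_one_le_exp |x|, abs_nonneg x]
  have h2 : |x| ^ k ≤ Real.exp ((k : ℝ) * |x|) := by
    rw [Real.exp_nat_mul]
    exact pow_le_pow_left₀ (abs_nonneg x) h1 k
  have h3 : t * x ≤ η * x + |x| := by
    have := le_abs_self ((t - η) * x)
    have := abs_mul (t - η) x
    nlinarith [abs_nonneg x, mul_le_mul_of_nonneg_right ht (abs_nonneg x)]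
  have key : |x| ^ k * Real.exp (t * x) ≤ Real.exp (η * x + ((k : ℝ) + 1) * |x|) := by
    calc |x| ^ k * Real.exp (t * x)
        ≤ Real.exp ((k : ℝ) * |x|) * Real.exp (η * x + |x|) := by
          exact mul_le_mul h2 (Real.exp_le_exp.mpr h3) (Real.exp_pos _).le (Real.exp_pos _).le
      _ = Real.exp (η * x + ((k : ℝ) + 1) * |x|) := by rw [← Real.exp_add]; ring_nf
  refine key.trans ?_
  rcases le_or_gt 0 x with hx | hx
  · rw [abs_of_nonneg hx]
    calc Real.exp (η * x + ((k : ℝ) + 1) * x) = Real.exp ((η + 1 + k) * x) := by ring_nf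
      _ ≤ _ := le_add_of_nonneg_right (Real.exp_pos _).le
  · rw [abs_of_neg hx]
    calc Real.exp (η * x + ((k : ℝ) + 1) * (-x)) = Real.exp ((η - (1 + k)) * x) := by ring_nf
      _ ≤ _ := le_add_of_nonneg_left (Real.exp_pos _).le

lemma my_integrable_pow_mul_exp (ν : Measure ℝ)
    (hint : ∀ η : ℝ, Integrable (fun x => Real.exp (η * x)) ν) (k : ℕ) (t : ℝ) :
    Integrable (fun x => x ^ k * Real.exp (t * x)) ν := by
  apply Integrable.mono' ((hint (t + 1 + k)).add (hint (t - (1 + k))))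
  · exact (Continuous.mul (continuous_pow k) (Real.continuous_exp.comp
      (continuous_const.mul continuous_id))).aestronglyMeasurable
  · filter_upwards with x
    have : ‖x ^ k * Real.exp (t * x)‖ = |x| ^ k * Real.exp (t * x) := by
      rw [norm_mul, Real.norm_eq_abs, Real.norm_eq_abs, abs_pow, Real.abs_exp]
    rw [this]
    exact my_abs_pow_mul_exp_le k t t x (by simp)

lemma my_hasDerivAt_integral (ν : Measure ℝ)
    (hint : ∀ η : ℝ, Integrable (fun x => Real.exp (η * x)) ν) (k : ℕ) (η : ℝ) :
    HasDerivAt (fun t => ∫ x, x ^ k * Real.exp (t * x) ∂ν)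
      (∫ x, x ^ (k + 1) * Real.exp (η * x) ∂ν) η := by
  have hcont : ∀ (m : ℕ) (t : ℝ), AEStronglyMeasurable (fun x : ℝ => x ^ m * Real.exp (t * x)) ν :=
    fun m t => (Continuous.mul (continuous_pow m) (Real.continuous_exp.comp
      (continuous_const.mul continuous_id))).aestronglyMeasurable
  have := hasDerivAt_integral_of_dominated_loc_of_deriv_le (μ := ν) (x₀ := η)
      (F := fun t x => x ^ k * Real.exp (t * x))
      (F' := fun t x => x ^ (k + 1) * Real.exp (t * x))
      (bound := fun x => Real.exp ((η + 1 + (k + 1 : ℕ)) * x) +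
        Real.exp ((η - (1 + (k + 1 : ℕ))) * x))
      (Metric.ball_mem_nhds η one_pos) (Eventually.of_forall fun t => hcont k t)
      (my_integrable_pow_mul_exp ν hint k η) (hcont (k + 1) η)
      ?_ ((hint _).add (hint _)) ?_
  · exact this.2
  · filter_upwards with x
    intro t ht
    have hd : |t - η| ≤ 1 := le_of_lt (by simpa [Real.dist_eq] using Metric.mem_ball.mp ht)
    have : ‖x ^ (k + 1) * Real.exp (t * x)‖ = |x| ^ (k + 1) * Real.exp (t * x) := by
      rw [norm_mul, Real.norm_eq_abs, Real.norm_eq_abs, abs_pow, Real.abs_exp]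
    rw [this]
    exact my_abs_pow_mul_exp_le (k + 1) η t x hd
  · filter_upwards with x
    intro t _
    have h1 : HasDerivAt (fun t : ℝ => t * x) x t := hasDerivAt_mul_const x
    have h2 : HasDerivAt (fun t : ℝ => Real.exp (t * x)) (Real.exp (t * x) * x) t :=
      h1.exp
    have h3 := h2.const_mul (x ^ k)
    exact h3.congr_deriv (by ring)

lemma my_le_one {s : ℝ} (hs : 0 ≤ s) : s * Real.exp (-s) ≤ 1 := by
  have h := Real.add_one_le_exp s
  have h2 : s * Real.exp (-s) ≤ Real.exp s * Real.exp (-s) :=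
    mul_le_mul_of_nonneg_right (by linarith) (Real.exp_pos _).le
  calc s * Real.exp (-s) ≤ Real.exp s * Real.exp (-s) := h2
    _ = 1 := by rw [← Real.exp_add]; simp

lemma my_cube {s t : ℝ} (hs : 0 ≤ s) (ht : 1 ≤ t) : t * (s ^ 2 * Real.exp (-(t * s))) ≤ 4 := by
  set u := t * s with hu
  have hu0 : 0 ≤ u := mul_nonneg (by linarith) hs
  have hsu : s ≤ u := by nlinarith
  have a1 : u / 2 * Real.exp (-(u / 2)) ≤ 1 := my_le_one (by positivity)
  have a2 : Real.exp (-(u / 2)) ≤ Real.exp (-(s / 2)) := Real.exp_le_exp.mpr (by linarith)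
  have a3 : u * Real.exp (-u) = 2 * (u / 2 * Real.exp (-(u / 2))) * Real.exp (-(u / 2)) := by
    rw [show -u = -(u / 2) + -(u / 2) by ring, Real.exp_add]; ring
  have a4 : u * Real.exp (-u) ≤ 2 * Real.exp (-(s / 2)) := by
    rw [a3]
    have e1 : (0:ℝ) < Real.exp (-(u / 2)) := Real.exp_pos _
    nlinarith [Real.exp_pos (-(s / 2))]
  have a5 : s / 2 * Real.exp (-(s / 2)) ≤ 1 := my_le_one (by positivity)
  have key : t * (s ^ 2 * Real.exp (-(t * s))) = s * (u * Real.exp (-u)) := by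
    rw [hu]; ring
  rw [key]
  nlinarith [Real.exp_pos (-(s / 2))]

lemma my_aux (ν : Measure ℝ)
    (hint : ∀ η : ℝ, Integrable (fun x => Real.exp (η * x)) ν)
    (h1 h2 : ℝ → ℝ)
    (hd2 : ∀ η, HasDerivAt h1 (h2 η) η)
    (hnn : ∀ η, 0 ≤ h2 η)
    (hmean : ∀ η, h1 η = (∫ x, x * Real.exp (η * x) ∂ν) / (∫ x, Real.exp (η * x) ∂ν))
    (y : ℝ) (hatom : 0 < ν {y}) (hle : ∀ᵐ x ∂ν, x ≤ y) :
    Tendsto h1 atTop (𝓝 y) ∧ Tendsto h2 atTop (𝓝 0) ∧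
      Tendsto (fun η => η * h2 η) atTop (𝓝 0) := by
  haveI : IsFiniteMeasure ν := by
    constructor
    have h : Integrable (fun _ : ℝ => (1 : ℝ)) ν := by simpa using hint 0
    exact ((integrable_const_iff.mp h).resolve_left one_ne_zero).measure_univ_lt_top
  set c : ℝ := (ν {y}).toReal with hcdef
  have hc : 0 < c := ENNReal.toReal_pos hatom.ne' (measure_lt_top ν {y}).ne
  set Z : ℝ → ℝ := fun t => ∫ x, Real.exp (t * x) ∂ν with hZdef
  set M : ℝ → ℝ := fun t => ∫ x, x * Real.exp (t * x) ∂ν with hMdef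
  set S : ℝ → ℝ := fun t => ∫ x, x ^ 2 * Real.exp (t * x) ∂ν with hSdef
  set A : ℝ → ℝ := fun t => ∫ x, (y - x) * Real.exp (t * (x - y)) ∂ν with hAdef
  set B : ℝ → ℝ := fun t => ∫ x, (y - x) ^ 2 * Real.exp (t * (x - y)) ∂ν with hBdef
  have hMint : ∀ t, Integrable (fun x => x * Real.exp (t * x)) ν := fun t => by
    simpa using my_integrable_pow_mul_exp ν hint 1 t
  have hSint : ∀ t, Integrable (fun x => x ^ 2 * Real.exp (t * x)) ν := fun t =>
    my_integrable_pow_mul_exp ν hint 2 t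
  -- lower bound on Z
  have hZge : ∀ t, Real.exp (t * y) * c ≤ Z t := by
    intro t
    have e1 : ∫ x in {y}, Real.exp (t * x) ∂ν = (ν {y}).toReal • Real.exp (t * y) :=
      integral_singleton _ y
    have e2 := setIntegral_le_integral (s := {y}) (μ := ν) (hint t)
      (Filter.Eventually.of_forall fun x => (Real.exp_pos _).le)
    rw [e1] at e2
    calc Real.exp (t * y) * c = (ν {y}).toReal • Real.exp (t * y) := by
          rw [smul_eq_mul]; ring
      _ ≤ Z t := e2
  have hZpos : ∀ t, 0 < Z t := fun t => lt_of_lt_of_le (by positivity) (hZge t)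
  -- derivatives
  have hZd : ∀ η, HasDerivAt Z (M η) η := by
    intro η
    have := my_hasDerivAt_integral ν hint 0 η
    simpa using this
  have hMd : ∀ η, HasDerivAt M (S η) η := by
    intro η
    have := my_hasDerivAt_integral ν hint 1 η
    simpa using this
  -- identity for A
  have hNA : ∀ t, y * Z t - M t = Real.exp (t * y) * A t := by
    intro t
    have e1 : (fun x => y * Real.exp (t * x) - x * Real.exp (t * x)) =
        fun x => Real.exp (t * y) * ((y - x) * Real.exp (t * (x - y))) := by
      funext x
      rw [show t * x = t * y + t * (x - y) by ring, Real.exp_add]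
      ring
    calc y * Z t - M t
        = ∫ x, (y * Real.exp (t * x) - x * Real.exp (t * x)) ∂ν := by
          rw [integral_sub ((hint t).const_mul y) (hMint t), integral_const_mul]
      _ = ∫ x, Real.exp (t * y) * ((y - x) * Real.exp (t * (x - y))) ∂ν := by rw [e1]
      _ = Real.exp (t * y) * A t := integral_const_mul _ _
  -- identity for B
  have hNB : ∀ t, y ^ 2 * Z t - 2 * y * M t + S t = Real.exp (t * y) * B t := by
    intro t
    have e1 : (fun x => y ^ 2 * Real.exp (t * x) - 2 * y * (x * Real.exp (t * x))
          + x ^ 2 * Real.exp (t * x)) =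
        fun x => Real.exp (t * y) * ((y - x) ^ 2 * Real.exp (t * (x - y))) := by
      funext x
      rw [show t * x = t * y + t * (x - y) by ring, Real.exp_add]
      ring
    have i2 : Integrable (fun x => y ^ 2 * Real.exp (t * x)) ν := (hint t).const_mul _
    have i3 : Integrable (fun x => 2 * y * (x * Real.exp (t * x))) ν := (hMint t).const_mul _
    have i1 : Integrable
        (fun x => y ^ 2 * Real.exp (t * x) - 2 * y * (x * Real.exp (t * x))) ν := i2.sub i3
    calc y ^ 2 * Z t - 2 * y * M t + S t
        = ∫ x, (y ^ 2 * Real.exp (t * x) - 2 * y * (x * Real.exp (t * x))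
            + x ^ 2 * Real.exp (t * x)) ∂ν := by
          rw [integral_add i1 (hSint t), integral_sub i2 i3,
            integral_const_mul, integral_const_mul]
      _ = ∫ x, Real.exp (t * y) * ((y - x) ^ 2 * Real.exp (t * (x - y))) ∂ν := by rw [e1]
      _ = Real.exp (t * y) * B t := integral_const_mul _ _
  have hAnn : ∀ t, 0 ≤ A t := by
    intro t
    apply integral_nonneg_of_ae
    filter_upwards [hle] with x hx
    exact mul_nonneg (by linarith) (Real.exp_pos _).le
  have hBnn : ∀ t, 0 ≤ B t := fun t =>
    integral_nonneg fun x => mul_nonneg (sq_nonneg _) (Real.exp_pos _).le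
  -- bounds relating h1, h2 to A, B
  have h1lb : ∀ t, 0 ≤ y - h1 t := by
    intro t
    rw [hmean t]
    rw [le_sub_iff_add_le, zero_add, div_le_iff₀ (hZpos t)]
    nlinarith [hNA t, hAnn t, Real.exp_pos (t * y)]
  have h1ub : ∀ t, y - h1 t ≤ A t / c := by
    intro t
    rw [hmean t, sub_div' (hZpos t).ne', div_le_div_iff₀ (hZpos t) hc]
    have := hNA t
    have := hZge t
    nlinarith [hAnn t, Real.exp_pos (t * y), hZpos t]
  have h2eq : ∀ η, h2 η = (S η * Z η - M η * M η) / Z η ^ 2 := by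
    intro η
    have h1fun : h1 = fun t => M t / Z t := funext fun t => hmean t
    have hdiv : HasDerivAt (fun t => M t / Z t)
        ((S η * Z η - M η * M η) / Z η ^ 2) η := (hMd η).div (hZd η) (hZpos η).ne'
    rw [← h1fun] at hdiv
    exact (hd2 η).unique hdiv
  have h2ub : ∀ η, h2 η ≤ B η / c := by
    intro η
    rw [h2eq η, div_le_div_iff₀ (pow_pos (hZpos η) 2) hc]
    have hq : S η * Z η - M η * M η ≤ (Real.exp (η * y) * B η) * Z η := by
      have e := hNB η
      nlinarith [sq_nonneg (M η - y * Z η),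
        mul_le_mul_of_nonneg_right (le_of_eq e) (hZpos η).le,
        mul_le_mul_of_nonneg_right (le_of_eq e.symm) (hZpos η).le]
    nlinarith [mul_le_mul_of_nonneg_right hq hc.le,
      mul_le_mul_of_nonneg_left (hZge η) (mul_nonneg (hBnn η) (hZpos η).le)]
  -- DCT limits
  have meas1 : ∀ t : ℝ, AEStronglyMeasurable (fun x => (y - x) * Real.exp (t * (x - y))) ν :=
    fun t => ((continuous_const.sub continuous_id).mul (Real.continuous_exp.comp
      (continuous_const.mul (continuous_id.sub continuous_const)))).aestronglyMeasurable
  have meas2 : ∀ t : ℝ, AEStronglyMeasurable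
      (fun x => (y - x) ^ 2 * Real.exp (t * (x - y))) ν :=
    fun t => (((continuous_const.sub continuous_id).pow 2).mul (Real.continuous_exp.comp
      (continuous_const.mul (continuous_id.sub continuous_const)))).aestronglyMeasurable
  have hAlim : Tendsto A atTop (𝓝 0) := by
    have h0 : Tendsto (fun t => ∫ x, (y - x) * Real.exp (t * (x - y)) ∂ν) atTop
        (𝓝 (∫ _x, (0 : ℝ) ∂ν)) := by
      apply tendsto_integral_filter_of_dominated_convergence (bound := fun _ => (1 : ℝ))
      · exact Eventually.of_forall meas1
      · rw [eventually_atTop]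
        refine ⟨1, fun t ht => ?_⟩
        filter_upwards [hle] with x hx
        have hs : 0 ≤ y - x := by linarith
        rw [show t * (x - y) = -(t * (y - x)) by ring, Real.norm_eq_abs, abs_mul,
          abs_of_nonneg hs, Real.abs_exp]
        have b1 := my_le_one (mul_nonneg (le_trans zero_le_one ht) hs)
        have b2 : (y - x) * Real.exp (-(t * (y - x))) ≤
            t * (y - x) * Real.exp (-(t * (y - x))) :=
          mul_le_mul_of_nonneg_right (by nlinarith) (Real.exp_pos _).le
        linarith
      · exact integrable_const 1
      · filter_upwards [hle] with x hx
        rcases eq_or_lt_of_le hx with heq | hlt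
        · simpa [heq] using (tendsto_const_nhds : Tendsto (fun _ : ℝ => (0 : ℝ)) atTop (𝓝 0))
        · have hneg : x - y < 0 := by linarith
          have hb : Tendsto (fun t : ℝ => t * (x - y)) atTop atBot :=
            (tendsto_mul_const_atBot_of_neg hneg).mpr tendsto_id
          have he : Tendsto (fun t : ℝ => Real.exp (t * (x - y))) atTop (𝓝 0) :=
            Real.tendsto_exp_atBot.comp hb
          simpa using he.const_mul (y - x)
    simpa using h0
  have hBlim : Tendsto B atTop (𝓝 0) := by
    have h0 : Tendsto (fun t => ∫ x, (y - x) ^ 2 * Real.exp (t * (x - y)) ∂ν) atTop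
        (𝓝 (∫ _x, (0 : ℝ) ∂ν)) := by
      apply tendsto_integral_filter_of_dominated_convergence (bound := fun _ => (4 : ℝ))
      · exact Eventually.of_forall meas2
      · rw [eventually_atTop]
        refine ⟨1, fun t ht => ?_⟩
        filter_upwards [hle] with x hx
        have hs : 0 ≤ y - x := by linarith
        rw [show t * (x - y) = -(t * (y - x)) by ring, Real.norm_eq_abs,
          abs_of_nonneg (mul_nonneg (sq_nonneg _) (Real.exp_pos _).le)]
        nlinarith [my_cube hs ht,
          mul_nonneg (sq_nonneg (y - x)) (Real.exp_pos (-(t * (y - x)))).le]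
      · exact integrable_const 4
      · filter_upwards [hle] with x hx
        rcases eq_or_lt_of_le hx with heq | hlt
        · simpa [heq] using (tendsto_const_nhds : Tendsto (fun _ : ℝ => (0 : ℝ)) atTop (𝓝 0))
        · have hneg : x - y < 0 := by linarith
          have hb : Tendsto (fun t : ℝ => t * (x - y)) atTop atBot :=
            (tendsto_mul_const_atBot_of_neg hneg).mpr tendsto_id
          have he : Tendsto (fun t : ℝ => Real.exp (t * (x - y))) atTop (𝓝 0) :=
            Real.tendsto_exp_atBot.comp hb
          simpa using he.const_mul ((y - x) ^ 2)
    simpa using h0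
  have hClim : Tendsto (fun t => t * B t) atTop (𝓝 0) := by
    have hrw : (fun t => t * B t) =
        fun t => ∫ x, t * ((y - x) ^ 2 * Real.exp (t * (x - y))) ∂ν :=
      funext fun t => (integral_const_mul t _).symm
    rw [hrw]
    have h0 : Tendsto (fun t => ∫ x, t * ((y - x) ^ 2 * Real.exp (t * (x - y))) ∂ν) atTop
        (𝓝 (∫ _x, (0 : ℝ) ∂ν)) := by
      apply tendsto_integral_filter_of_dominated_convergence (bound := fun _ => (4 : ℝ))
      · exact Eventually.of_forall fun t => (continuous_const.mul
          (((continuous_const.sub continuous_id).pow 2).mul (Real.continuous_exp.comp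
          (continuous_const.mul (continuous_id.sub continuous_const))))).aestronglyMeasurable
      · rw [eventually_atTop]
        refine ⟨1, fun t ht => ?_⟩
        filter_upwards [hle] with x hx
        have hs : 0 ≤ y - x := by linarith
        rw [show t * (x - y) = -(t * (y - x)) by ring, Real.norm_eq_abs,
          abs_of_nonneg (mul_nonneg (by linarith)
            (mul_nonneg (sq_nonneg _) (Real.exp_pos _).le))]
        exact my_cube hs ht
      · exact integrable_const 4
      · filter_upwards [hle] with x hx
        rcases eq_or_lt_of_le hx with heq | hlt
        · simpa [heq] using (tendsto_const_nhds : Tendsto (fun _ : ℝ => (0 : ℝ)) atTop (𝓝 0))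
        · have hfeq : (fun t : ℝ => t * ((y - x) ^ 2 * Real.exp (t * (x - y)))) =
              fun t => (y - x) * (t * (y - x) * Real.exp (-(t * (y - x)))) := by
            funext t
            rw [show t * (x - y) = -(t * (y - x)) by ring]
            ring
          rw [hfeq]
          have g1 : Tendsto (fun v : ℝ => v * Real.exp (-v)) atTop (𝓝 0) := by
            simpa using Real.tendsto_pow_mul_exp_neg_atTop_nhds_zero 1
          have g2 : Tendsto (fun t : ℝ => t * (y - x)) atTop atTop :=
            Tendsto.atTop_mul_const (by linarith) tendsto_id
          simpa using ((g1.comp g2).const_mul (y - x))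
    simpa using h0
  -- conclusions
  have t1 : Tendsto (fun t => y - h1 t) atTop (𝓝 0) := by
    refine tendsto_of_tendsto_of_tendsto_of_le_of_le' tendsto_const_nhds
      (by simpa using hAlim.div_const c) (Eventually.of_forall h1lb)
      (Eventually.of_forall h1ub)
  have T1 : Tendsto h1 atTop (𝓝 y) := by
    have := (tendsto_const_nhds : Tendsto (fun _ : ℝ => y) atTop (𝓝 y)).sub t1
    simpa using this
  have T2 : Tendsto h2 atTop (𝓝 0) :=
    tendsto_of_tendsto_of_tendsto_of_le_of_le' tendsto_const_nhds
      (by simpa using hBlim.div_const c) (Eventually.of_forall hnn)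
      (Eventually.of_forall h2ub)
  have T3 : Tendsto (fun η => η * h2 η) atTop (𝓝 0) := by
    refine tendsto_of_tendsto_of_tendsto_of_le_of_le' tendsto_const_nhds
      (show Tendsto (fun t => t * B t / c) atTop (𝓝 0) by simpa using hClim.div_const c)
      ?_ ?_
    · rw [eventually_atTop]
      exact ⟨0, fun t ht => mul_nonneg ht (hnn t)⟩
    · rw [eventually_atTop]
      refine ⟨0, fun t ht => ?_⟩
      calc t * h2 t ≤ t * (B t / c) := mul_le_mul_of_nonneg_left (h2ub t) ht
        _ = t * B t / c := by ring
  exact ⟨T1, T2, T3⟩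

/-- **Limits of the cumulant function at a boundary observation (Lemma 1).**
Let `ν` be a nonzero σ-finite measure on `ℝ` whose moment generating function is finite
everywhere, `h(η) = log ∫ e^{ηx} dν(x)` the log-partition function, `h1 = h'` (the mean of
the exponentially tilted distribution) and `h2 = h''≥ 0`. If `y` lies in the closure of
the support of `ν`, `ν` has an atom at `y`, and there is no `η ∈ ℝ` with `h1 η = y`
(the MLE does not exist), then: if `y` is the essential supremum of `ν`, as `η → +∞` one
has `h1 η → y`, `h2 η → 0` and `η · h2 η → 0`; respectively, if `y` is the essential
infimum of `ν`, the same limits hold as `η → −∞`. -/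
theorem cumulant_limits_no_mle
    (ν : Measure ℝ) (hne : ν ≠ 0) [SigmaFinite ν]
    (hint : ∀ η : ℝ, Integrable (fun x => Real.exp (η * x)) ν)
    (h h1 h2 : ℝ → ℝ)
    (hdef : ∀ η, h η = Real.log (∫ x, Real.exp (η * x) ∂ν))
    (hd1 : ∀ η, HasDerivAt h (h1 η) η)
    (hd2 : ∀ η, HasDerivAt h1 (h2 η) η)
    (hnn : ∀ η, 0 ≤ h2 η)
    (hmean : ∀ η, h1 η = (∫ x, x * Real.exp (η * x) ∂ν) / (∫ x, Real.exp (η * x) ∂ν))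
    (y : ℝ)
    (hsupp : y ∈ closure {x : ℝ | ∀ U ∈ nhds x, 0 < ν U})
    (hnomle : ¬∃ η : ℝ, h1 η = y)
    (hatom : 0 < ν {y}) :
    ((∀ᵐ x ∂ν, x ≤ y) →
        Tendsto h1 atTop (nhds y) ∧ Tendsto h2 atTop (nhds 0) ∧
          Tendsto (fun η => η * h2 η) atTop (nhds 0)) ∧
    ((∀ᵐ x ∂ν, y ≤ x) →
        Tendsto h1 atBot (nhds y) ∧ Tendsto h2 atBot (nhds 0) ∧
          Tendsto (fun η => η * h2 η) atBot (nhds 0)) := by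
  constructor
  · intro hle
    exact my_aux ν hint h1 h2 hd2 hnn hmean y hatom hle
  · intro hge
    set ν' : Measure ℝ := Measure.map (fun x : ℝ => -x) ν with hν'
    have hmeas : Measurable (fun x : ℝ => -x) := measurable_neg
    have hint' : ∀ η : ℝ, Integrable (fun x => Real.exp (η * x)) ν' := by
      intro η
      have hg : AEStronglyMeasurable (fun x : ℝ => Real.exp (η * x))
          (Measure.map (fun x : ℝ => -x) ν) :=
        Continuous.aestronglyMeasurable (by continuity)
      rw [hν', integrable_map_measure hg hmeas.aemeasurable]
      have : ((fun x => Real.exp (η * x)) ∘ fun x : ℝ => -x) =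
          fun x => Real.exp ((-η) * x) := by
        funext x; simp only [Function.comp_apply]; ring_nf
      rw [this]
      exact hint (-η)
    have hd2' : ∀ η, HasDerivAt (fun s => -h1 (-s)) (h2 (-η)) η := by
      intro η
      have a := ((hd2 (-η)).comp η (hasDerivAt_neg η)).neg
      exact a.congr_deriv (by ring)
    have hnn' : ∀ η, 0 ≤ h2 (-η) := fun η => hnn (-η)
    have hmean' : ∀ η, (fun s => -h1 (-s)) η =
        (∫ x, x * Real.exp (η * x) ∂ν') / (∫ x, Real.exp (η * x) ∂ν') := by
      intro η
      have hg1 : AEStronglyMeasurable (fun x : ℝ => x * Real.exp (η * x))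
          (Measure.map (fun x : ℝ => -x) ν) :=
        Continuous.aestronglyMeasurable (by continuity)
      have hg2 : AEStronglyMeasurable (fun x : ℝ => Real.exp (η * x))
          (Measure.map (fun x : ℝ => -x) ν) :=
        Continuous.aestronglyMeasurable (by continuity)
      rw [hν', integral_map hmeas.aemeasurable hg1, integral_map hmeas.aemeasurable hg2]
      have e1 : ∫ x : ℝ, -x * Real.exp (η * -x) ∂ν =
          -∫ x : ℝ, x * Real.exp ((-η) * x) ∂ν := by
        rw [← integral_neg]
        congr 1
        funext x
        ring_nf
      have e2 : ∫ x : ℝ, Real.exp (η * -x) ∂ν = ∫ x : ℝ, Real.exp ((-η) * x) ∂ν := by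
        congr 1
        funext x
        ring_nf
      simp only []
      rw [e1, e2, hmean (-η), neg_div]
    have hatom' : 0 < ν' {-y} := by
      rw [hν', Measure.map_apply hmeas (measurableSet_singleton _)]
      have : (fun x : ℝ => -x) ⁻¹' {-y} = {y} := by
        ext x; simp [neg_inj]
      rwa [this]
    have hle' : ∀ᵐ x ∂ν', x ≤ -y := by
      rw [hν', ae_map_iff hmeas.aemeasurable (measurableSet_Iic : MeasurableSet (Set.Iic (-y)))]
      filter_upwards [hge] with x hx
      simpa using hx
    obtain ⟨c1, c2, c3⟩ := my_aux ν' hint' (fun s => -h1 (-s)) (fun s => h2 (-s))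
      hd2' hnn' hmean' (-y) hatom' hle'
    have hneg : Tendsto (fun s : ℝ => -s) atBot atTop := tendsto_neg_atBot_atTop
    refine ⟨?_, ?_, ?_⟩
    · simpa using (c1.comp hneg).neg
    · simpa [Function.comp_def] using c2.comp hneg
    · simpa using (c3.comp hneg).neg
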